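/- (Second-moment bound for exponential moving averages) Let β_1 ∈ [0,1), let β_{11}, β_{12}, … be reals with 0 ≤ β_{1j} ≤ β_1 for all j, let g_1, g_2, … be real numbers, and define m_0 = 0 and m_t = β_{1t}·m_{t−1} + (1 − β_{1t})·g_t for t ≥ 1. Then for every t ≥ 1, m_t² ≤ (Σ_{j=1}^t β_1^{t−j}) · (Σ_{j=1}^t β_1^{t−j}·g_j²), and hence m_t² ≤ (1/(1−β_1))·Σ_{j=1}^t β_1^{t−j}·g_j². -/

import Mathlib

lemma ema_sum_shift (β : ℝ) (f : ℕ → ℝ) (t : ℕ) (ht : 1 ≤ t) :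
    ∑ j ∈ Finset.Icc 1 (t+1), β ^ (t+1-j) * f j
      = β * ∑ j ∈ Finset.Icc 1 t, β ^ (t-j) * f j + f (t+1) := by
  rw [Finset.sum_Icc_succ_top (by omega : 1 ≤ t+1)]
  rw [Nat.sub_self, pow_zero, one_mul, Finset.mul_sum]
  congr 1
  apply Finset.sum_congr rfl
  intro j hj
  simp only [Finset.mem_Icc] at hj
  have : t + 1 - j = (t - j) + 1 := by omega
  rw [this, pow_succ]
  ring

/-- Second-moment bound for exponential moving averages: with `m 0 = 0`,
`m t = β₁ₜ t * m (t-1) + (1 - β₁ₜ t) * g t` and `0 ≤ β₁ₜ j ≤ β₁ < 1`, we have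
`(m t)² ≤ (∑_{j=1}^t β₁^{t-j}) (∑_{j=1}^t β₁^{t-j} (g j)²)`
and hence `(m t)² ≤ (1/(1-β₁)) ∑_{j=1}^t β₁^{t-j} (g j)²`. -/
theorem ema_second_moment_bound (β₁ : ℝ) (hβ₁0 : 0 ≤ β₁) (hβ₁1 : β₁ < 1)
    (β₁ₜ : ℕ → ℝ) (hβ₁ₜ : ∀ j, 1 ≤ j → 0 ≤ β₁ₜ j ∧ β₁ₜ j ≤ β₁)
    (g m : ℕ → ℝ) (hm0 : m 0 = 0)
    (hm : ∀ t, 1 ≤ t → m t = β₁ₜ t * m (t - 1) + (1 - β₁ₜ t) * g t) :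
    ∀ t, 1 ≤ t →
      (m t) ^ 2 ≤ (∑ j ∈ Finset.Icc 1 t, β₁ ^ (t - j)) *
          (∑ j ∈ Finset.Icc 1 t, β₁ ^ (t - j) * (g j) ^ 2) ∧
      (m t) ^ 2 ≤ (1 / (1 - β₁)) * ∑ j ∈ Finset.Icc 1 t, β₁ ^ (t - j) * (g j) ^ 2 := by
  have hβ' : (0:ℝ) < 1 - β₁ := by linarith
  set S : ℕ → ℝ := fun t => ∑ j ∈ Finset.Icc 1 t, β₁ ^ (t - j) with hS
  set T : ℕ → ℝ := fun t => ∑ j ∈ Finset.Icc 1 t, β₁ ^ (t - j) * (g j) ^ 2 with hT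
  -- one-step bound
  have step : ∀ t, 1 ≤ t → (m t)^2 ≤ β₁ * (m (t-1))^2 + (g t)^2 := by
    intro t ht
    obtain ⟨ha0, ha1⟩ := hβ₁ₜ t ht
    rw [hm t ht]
    nlinarith [sq_nonneg (m (t-1) - g t), sq_nonneg (m (t-1)), sq_nonneg (g t),
      mul_nonneg ha0 (sq_nonneg (m (t-1) - g t))]
  -- nonnegativity
  have hSnn : ∀ t, 0 ≤ S t := by
    intro t; apply Finset.sum_nonneg; intro j _; positivity
  have hTnn : ∀ t, 0 ≤ T t := by
    intro t; apply Finset.sum_nonneg; intro j _; positivity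
  -- recursions
  have hSrec : ∀ t, 1 ≤ t → S (t+1) = β₁ * S t + 1 := by
    intro t ht
    have := ema_sum_shift β₁ (fun _ => 1) t ht
    simpa [hS, Finset.mul_sum] using this
  have hTrec : ∀ t, 1 ≤ t → T (t+1) = β₁ * T t + (g (t+1))^2 := by
    intro t ht
    exact ema_sum_shift β₁ (fun j => (g j)^2) t ht
  -- main induction
  have main : ∀ t, 1 ≤ t → (m t)^2 ≤ S t * T t ∧ S t ≤ 1 / (1 - β₁) := by
    intro t ht
    induction t, ht using Nat.le_induction with
    | base =>
      constructor
      · obtain ⟨ha0, ha1⟩ := hβ₁ₜ 1 le_rfl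
        have h1 : m 1 = (1 - β₁ₜ 1) * g 1 := by
          rw [hm 1 le_rfl]; simp [hm0]
        have hS1 : S 1 = 1 := by simp [hS]
        have hT1 : T 1 = (g 1)^2 := by simp [hT]
        rw [h1, hS1, hT1]
        nlinarith [sq_nonneg (g 1), mul_nonneg ha0 (sq_nonneg (g 1)),
          mul_nonneg (mul_nonneg ha0 ha0) (sq_nonneg (g 1)),
          mul_nonneg (mul_nonneg ha0 hβ₁0) (sq_nonneg (g 1))]
      · have : S 1 = 1 := by simp [hS]
        rw [this, le_div_iff₀ hβ']; linarith
    | succ t ht ih =>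
      obtain ⟨ih1, ih2⟩ := ih
      have hSr := hSrec t ht
      have hTr := hTrec t ht
      have hstep := step (t+1) (by omega)
      simp only [Nat.add_sub_cancel] at hstep
      constructor
      · have key : β₁ * (S t * T t) + (g (t+1))^2 ≤ S (t+1) * T (t+1) := by
          rw [hSr, hTr]
          have h1 : (1 - β₁) * S t ≤ 1 := by
            have := mul_le_mul_of_nonneg_left ih2 (le_of_lt hβ')
            rwa [mul_one_div, div_self hβ'.ne'] at this
          nlinarith [hSnn t, hTnn t, sq_nonneg (g (t+1)),
            mul_nonneg hβ₁0 (mul_nonneg (hSnn t) (sq_nonneg (g (t+1)))),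
            mul_nonneg hβ₁0 (mul_nonneg (hTnn t) (sub_nonneg.mpr h1))]
        calc (m (t+1))^2 ≤ β₁ * (m t)^2 + (g (t+1))^2 := hstep
          _ ≤ β₁ * (S t * T t) + (g (t+1))^2 := by nlinarith
          _ ≤ S (t+1) * T (t+1) := key
      · have h1 : (1 - β₁) * S t ≤ 1 := by
          have := mul_le_mul_of_nonneg_left ih2 (le_of_lt hβ')
          rwa [mul_one_div, div_self hβ'.ne'] at this
        rw [hSr, le_div_iff₀ hβ']
        nlinarith
  intro t ht
  obtain ⟨h1, h2⟩ := main t ht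
  refine ⟨h1, ?_⟩
  calc (m t)^2 ≤ S t * T t := h1
    _ ≤ (1 / (1 - β₁)) * T t := mul_le_mul_of_nonneg_right h2 (hTnn t)
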